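/- Let G be the directed cycle on n vertices in which every edge has weight 1 − K/n, where 0 < K ≤ n, and let the thresholds θ_v be independent Uniform[0,1] random variables. In the linear influence model, the fractional influence vector assigning x_v = K/n to every vertex v yields expected final activated set size E_θ[|S_n^θ|] = n(1 − (1 − K/n)^n). -/

import Mathlib

open MeasureTheory Finset
open scoped Classical

/-- The final activated set of the linear influence process on a weighted digraph
with weights `wt`, thresholds `θ` and direct influences `x`: starting from `∅`, a
vertex `v` activates once the total weight of edges from the active set into `v`
plus `x v` reaches `θ v`; the process runs for `|W|` rounds. -/
noncomputable def finalSet {W : Type*} [Fintype W] (wt : W → W → ℝ) (θ x : W → ℝ) :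
    Finset W :=
  (fun S => S ∪ Finset.univ.filter (fun v => θ v ≤ (∑ u ∈ S, wt u v) + x v))^[Fintype.card W] ∅

/-- The expected size of the final activated set of the linear influence process,
the thresholds being i.i.d. `Uniform [0,1]`. -/
noncomputable def sigmaLin {W : Type*} [Fintype W] (wt : W → W → ℝ) (x : W → ℝ) : ℝ :=
  ∫ θ : W → ℝ, ((finalSet wt θ x).card : ℝ)
    ∂(Measure.pi fun _ : W => volume.restrict (Set.Icc 0 1))

/-- On the directed cycle on `n` vertices with edge weights `1 - K/n` and i.i.d.
uniform thresholds, applying fractional influence `K/n` to every vertex activates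
`n (1 - (1 - K/n)^n)` vertices in expectation. -/
theorem stmt7 (n : ℕ) (hn : 1 ≤ n) (K : ℝ) (hK0 : 0 < K) (hKn : K ≤ n) :
    let wt : Fin n → Fin n → ℝ :=
      fun u v => if ((u : ℕ) + 1) % n = (v : ℕ) then 1 - K / n else 0
    sigmaLin wt (fun _ => K / n) = n * (1 - (1 - K / n) ^ n) := by
  intro wt
  haveI : NeZero n := ⟨by omega⟩
  haveI : IsProbabilityMeasure (volume.restrict (Set.Icc (0:ℝ) 1)) := ⟨by simp⟩
  have hnpos : (0:ℝ) < n := by exact_mod_cast hn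
  have hx0 : 0 < K / n := div_pos hK0 hnpos
  have hx1 : K / n ≤ 1 := by rw [div_le_one hnpos]; exact hKn
  set x : Fin n → ℝ := fun _ => K / n with hxdef
  set μ : Measure (Fin n → ℝ) :=
    Measure.pi fun _ : Fin n => volume.restrict (Set.Icc 0 1) with hμ
  set C : Set (Fin n → ℝ) := Set.pi Set.univ (fun _ : Fin n => Set.Ioi (K / n)) with hCdef
  have hC : MeasurableSet C := MeasurableSet.univ_pi (fun _ => measurableSet_Ioi)
  have hwt_nonneg : ∀ u v, 0 ≤ wt u v := by
    intro u v
    simp only [wt]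
    split
    · linarith
    · exact le_refl _
  set F : (Fin n → ℝ) → Finset (Fin n) → Finset (Fin n) :=
    fun θ S => S ∪ Finset.univ.filter (fun v => θ v ≤ (∑ u ∈ S, wt u v) + x v) with hF
  have hfinal : ∀ θ, finalSet wt θ x = (F θ)^[n] ∅ := by
    intro θ
    simp only [finalSet, Fintype.card_fin, hF]
    congr!
  have hmono : ∀ θ, Monotone (fun m => (F θ)^[m] ∅) := by
    intro θ
    apply monotone_nat_of_le_succ
    intro m
    rw [Function.iterate_succ_apply']
    exact Finset.subset_union_left
  have key : ∀ θ : Fin n → ℝ, (∀ v, θ v ∈ Set.Icc (0:ℝ) 1) →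
      ((finalSet wt θ x).card : ℝ) = Set.indicator Cᶜ (fun _ => (n:ℝ)) θ := by
    intro θ hθ
    by_cases hmem : θ ∈ C
    · have hCv : ∀ v, K / n < θ v := fun v => hmem v (Set.mem_univ v)
      have hfix : F θ ∅ = ∅ := by
        ext v
        simp only [hF, Finset.sum_empty, zero_add, Finset.mem_union, Finset.mem_filter,
          Finset.mem_univ, true_and, Finset.notMem_empty, false_or, iff_false]
        exact not_le.2 (hCv v)
      rw [hfinal, Function.iterate_fixed hfix, Set.indicator_of_notMem (by simpa using hmem)]
      simp
    · obtain ⟨v0, -, hv0'⟩ : ∃ v0 ∈ Set.univ, ¬ (K / n < θ v0) := by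
        simpa [hCdef, Set.mem_pi] using hmem
      have hv0 : θ v0 ≤ K / n := not_lt.1 hv0'
      open Fin.NatCast in
      have step : ∀ j : ℕ, j < n → (v0 + (j : Fin n)) ∈ (F θ)^[j + 1] ∅ := by
        intro j
        induction j with
        | zero =>
          intro _
          simp only [Nat.cast_zero, add_zero, Function.iterate_one, hF]
          refine Finset.mem_union_right _ ?_
          simp only [Finset.mem_filter, Finset.mem_univ, true_and, Finset.sum_empty, zero_add]
          exact hv0
        | succ j ih =>
          intro hj
          have hjn : j < n := by omega
          have hv : (v0 + (j : Fin n)) ∈ (F θ)^[j + 1] ∅ := ih hjn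
          set v : Fin n := v0 + (j : Fin n) with hvdef
          have hcast : ((j + 1 : ℕ) : Fin n) = (j : Fin n) + 1 := by push_cast; ring
          have hveq : v0 + ((j + 1 : ℕ) : Fin n) = v + 1 := by rw [hcast, hvdef]; abel
          rw [hveq, Function.iterate_succ_apply']
          refine Finset.mem_union_right _ ?_
          simp only [Finset.mem_filter, Finset.mem_univ, true_and]
          have hwtv : wt v (v + 1) = 1 - K / n := by
            have h1 : ((v + 1 : Fin n) : ℕ) = ((v : ℕ) + 1) % n := by
              rw [Fin.add_def]; simp [Fin.val_one']
            simp [wt, h1]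
          have hsum : wt v (v + 1) ≤ ∑ u ∈ (F θ)^[j + 1] ∅, wt u (v + 1) :=
            Finset.single_le_sum (fun i _ => hwt_nonneg i (v + 1)) hv
          have hθ1 : θ (v + 1) ≤ 1 := (hθ (v + 1)).2
          have hxv : x (v + 1) = K / n := rfl
          rw [hxv, hwtv] at *
          linarith
      open Fin.NatCast in
      have huniv : finalSet wt θ x = Finset.univ := by
        rw [hfinal]
        apply Finset.eq_univ_of_forall
        intro v
        have hj : ((v - v0 : Fin n) : ℕ) < n := (v - v0).isLt
        have hstep := step ((v - v0 : Fin n) : ℕ) hj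
        rw [Fin.cast_val_eq_self (v - v0)] at hstep
        have hveq : v0 + (v - v0) = v := by abel
        rw [hveq] at hstep
        exact hmono θ (by omega : ((v - v0 : Fin n) : ℕ) + 1 ≤ n) hstep
      rw [huniv, Set.indicator_of_mem (Set.mem_compl hmem)]
      simp
  -- a.e. the thresholds lie in [0,1]
  have hBfull : ∀ᵐ θ ∂μ, ∀ v, θ v ∈ Set.Icc (0:ℝ) 1 := by
    have hB : μ (Set.pi Set.univ (fun _ : Fin n => Set.Icc (0:ℝ) 1)) = 1 := by
      rw [hμ, Measure.pi_pi]
      simp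
    have hBc : μ (Set.pi Set.univ (fun _ : Fin n => Set.Icc (0:ℝ) 1))ᶜ = 0 := by
      rw [measure_compl (MeasurableSet.univ_pi fun _ => measurableSet_Icc) (measure_ne_top _ _),
        hB, measure_univ, tsub_self]
    refine (ae_iff.2 ?_)
    have hset : {θ : Fin n → ℝ | ¬ ∀ v, θ v ∈ Set.Icc (0:ℝ) 1}
        = (Set.pi Set.univ fun _ : Fin n => Set.Icc (0:ℝ) 1)ᶜ := by
      ext θ
      simp only [Set.mem_setOf_eq, Set.mem_compl_iff, Set.mem_pi, Set.mem_univ, true_implies]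
    rw [hset, hBc]
  have hint : sigmaLin wt x = ∫ θ, Set.indicator Cᶜ (fun _ => (n:ℝ)) θ ∂μ := by
    refine integral_congr_ae ?_
    filter_upwards [hBfull] with θ hθ
    exact key θ hθ
  have hμC : μ C = ENNReal.ofReal ((1 - K / n) ^ n) := by
    rw [hCdef, hμ, Measure.pi_pi]
    have hfac : (volume.restrict (Set.Icc (0:ℝ) 1)) (Set.Ioi (K / n))
        = ENNReal.ofReal (1 - K / n) := by
      rw [Measure.restrict_apply measurableSet_Ioi]
      have : Set.Ioi (K / n) ∩ Set.Icc (0:ℝ) 1 = Set.Ioc (K / n) 1 := by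
        ext y
        simp only [Set.mem_inter_iff, Set.mem_Ioi, Set.mem_Icc, Set.mem_Ioc]
        constructor
        · rintro ⟨h1, _, h3⟩; exact ⟨h1, h3⟩
        · rintro ⟨h1, h2⟩; exact ⟨h1, le_of_lt (lt_of_le_of_lt hx0.le h1), h2⟩
      rw [this, Real.volume_Ioc]
    rw [hfac, Finset.prod_const, Finset.card_univ, Fintype.card_fin,
      ← ENNReal.ofReal_pow (by linarith)]
  have hμCc : (μ Cᶜ).toReal = 1 - (1 - K / n) ^ n := by
    haveI : IsProbabilityMeasure μ := by rw [hμ]; infer_instance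
    rw [measure_compl hC (measure_ne_top _ _), measure_univ, hμC,
      ENNReal.toReal_sub_of_le (by
        rw [← ENNReal.ofReal_one]
        exact ENNReal.ofReal_le_ofReal (by
          have h01 : (0:ℝ) ≤ 1 - K / n := by linarith
          calc (1 - K / n) ^ n ≤ 1 ^ n := pow_le_pow_left₀ h01 (by linarith) n
            _ = 1 := one_pow n)) (by simp)]
    rw [ENNReal.toReal_one, ENNReal.toReal_ofReal (pow_nonneg (by linarith) n)]
  rw [hint, integral_indicator_const _ hC.compl, measureReal_def, hμCc]
  simp [smul_eq_mul, mul_comm]
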